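/- Let M, n, p be positive integers with n + p < M. Let K = (k_{ij}) be an invertible M×M real matrix such that k_{ij} = 0 whenever i − j > p (in particular this holds if K is banded of bandwidth p). Let C' be the submatrix of K⁻¹ consisting of rows n+1,…,M and columns 1,…,n+p. Then rank C' ≤ p. -/

import Mathlib

/-- If `K` is an invertible `M × M` real matrix with `K i j = 0` whenever `i - j > p`
(in particular if `K` is banded of bandwidth `p`), then the submatrix of `K⁻¹` formed by
rows `n+1, …, M` and columns `1, …, n+p` has rank at most `p`. -/
theorem rank_lower_offdiag_block_le (M n p : ℕ) (hn : 0 < n) (hp : 0 < p) (hM : n + p < M)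
    (K : Matrix (Fin M) (Fin M) ℝ) (hK : IsUnit K)
    (hband : ∀ i j : Fin M, (j : ℕ) + p < (i : ℕ) → K i j = 0) :
    (K⁻¹.submatrix
        (fun i : Fin (M - n) => (⟨n + (i : ℕ), by have := i.isLt; omega⟩ : Fin M))
        (fun j : Fin (n + p) => (⟨(j : ℕ), lt_trans j.isLt hM⟩ : Fin M))).rank
      ≤ p := by
  have hdet : IsUnit K.det := (Matrix.isUnit_iff_isUnit_det K).mp hK
  have hKB : K * K⁻¹ = 1 := Matrix.mul_nonsing_inv K hdet
  set e1 : Fin (M - n) → Fin M := fun i => ⟨n + (i : ℕ), by have := i.isLt; omega⟩ with he1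
  set e2 : Fin (M - n - p) → Fin M := fun i => ⟨n + p + (i : ℕ), by have := i.isLt; omega⟩ with he2
  set e3 : Fin (n + p) → Fin M := fun j => ⟨(j : ℕ), lt_trans j.isLt hM⟩ with he3
  set B := K⁻¹ with hB
  set C : Matrix (Fin (M - n)) (Fin (n + p)) ℝ := B.submatrix e1 e3 with hC
  set L : Matrix (Fin (M - n - p)) (Fin (M - n)) ℝ := K.submatrix e2 e1 with hL
  -- summation over image of e1
  have sum_e1 : ∀ (f : Fin M → ℝ), (∀ t : Fin M, (t : ℕ) < n → f t = 0) →
      (∑ t, f t) = ∑ k, f (e1 k) := by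
    intro f hf
    have hinj : Function.Injective e1 := by
      intro a b hab
      have : (e1 a : ℕ) = (e1 b : ℕ) := by rw [hab]
      simp only [he1] at this
      exact Fin.ext (by omega)
    rw [← Finset.sum_image (f := f) (g := e1) (fun x _ y _ h => hinj h)]
    symm
    apply Finset.sum_subset (Finset.subset_univ _)
    intro t _ ht
    apply hf
    by_contra h
    push_neg at h
    apply ht
    simp only [Finset.mem_image, Finset.mem_univ, true_and]
    exact ⟨⟨(t : ℕ) - n, by have := t.isLt; omega⟩, Fin.ext (by simp [he1]; omega)⟩
  have sum_e2 : ∀ (f : Fin M → ℝ), (∀ t : Fin M, (t : ℕ) < n + p → f t = 0) →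
      (∑ t, f t) = ∑ k, f (e2 k) := by
    intro f hf
    have hinj : Function.Injective e2 := by
      intro a b hab
      have : (e2 a : ℕ) = (e2 b : ℕ) := by rw [hab]
      simp only [he2] at this
      exact Fin.ext (by omega)
    rw [← Finset.sum_image (f := f) (g := e2) (fun x _ y _ h => hinj h)]
    symm
    apply Finset.sum_subset (Finset.subset_univ _)
    intro t _ ht
    apply hf
    by_contra h
    push_neg at h
    apply ht
    simp only [Finset.mem_image, Finset.mem_univ, true_and]
    exact ⟨⟨(t : ℕ) - (n + p), by have := t.isLt; omega⟩, Fin.ext (by simp [he2]; omega)⟩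
  -- L * C = 0
  have hLC : L * C = 0 := by
    ext i j
    simp only [Matrix.mul_apply, hL, hC, Matrix.submatrix_apply, Matrix.zero_apply]
    have h1 : (∑ t, K (e2 i) t * B t (e3 j)) = ∑ k, K (e2 i) (e1 k) * B (e1 k) (e3 j) := by
      apply sum_e1
      intro t ht
      have : K (e2 i) t = 0 := by
        apply hband
        simp only [he2]
        omega
      rw [this, zero_mul]
    rw [← h1]
    have : (∑ t, K (e2 i) t * B t (e3 j)) = (K * B) (e2 i) (e3 j) := by
      rw [Matrix.mul_apply]
    rw [this, hKB]
    have hne : e2 i ≠ e3 j := by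
      intro h
      have : (e2 i : ℕ) = (e3 j : ℕ) := by rw [h]
      simp only [he2, he3] at this
      have := j.isLt
      omega
    simp [Matrix.one_apply, hne]
  -- L has full row rank
  have hLrank : L.rank = M - n - p := by
    have hinj : Function.Injective L.transpose.mulVecLin := by
      rw [← LinearMap.ker_eq_bot]
      rw [LinearMap.ker_eq_bot']
      intro x hx
      -- define y : Fin M → ℝ extending x by zeros
      set y : Fin M → ℝ := fun t =>
        if h : n + p ≤ (t : ℕ) then x ⟨(t : ℕ) - (n + p), by have := t.isLt; omega⟩ else 0 with hy
      have hyK : Matrix.vecMul y K = 0 := by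
        ext j
        simp only [Matrix.vecMul, dotProduct, Pi.zero_apply]
        have h2 : (∑ t, y t * K t j) = ∑ k, y (e2 k) * K (e2 k) j := by
          apply sum_e2
          intro t ht
          have : y t = 0 := by simp only [hy]; rw [dif_neg]; omega
          rw [this, zero_mul]
        rw [h2]
        have hye2 : ∀ k : Fin (M - n - p), y (e2 k) = x k := by
          intro k
          simp only [hy, he2]
          rw [dif_pos (by simp)]
          congr 1
          exact Fin.ext (by simp)
        by_cases hj : (j : ℕ) < n
        · apply Finset.sum_eq_zero
          intro k _
          have : K (e2 k) j = 0 := by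
            apply hband
            simp only [he2]
            omega
          rw [this, mul_zero]
        · push_neg at hj
          have hmul := congrFun hx ⟨(j : ℕ) - n, by have := j.isLt; omega⟩
          simp only [Matrix.mulVecLin_apply, Matrix.mulVec, dotProduct,
            Matrix.transpose_apply, Pi.zero_apply] at hmul
          have hLK : ∀ (k : Fin (M - n - p)) (h : (j : ℕ) - n < M - n),
              L k ⟨(j : ℕ) - n, h⟩ = K (e2 k) j := by
            intro k h
            rw [hL, Matrix.submatrix_apply]
            congr 1
            exact Fin.ext (by simp [he1]; omega)
          rw [← hmul]
          apply Finset.sum_congr rfl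
          intro k _
          rw [hye2 k, hLK k, mul_comm]
      have hy0 : y = 0 := by
        have := congrArg (fun v => Matrix.vecMul v K⁻¹) hyK
        simpa [Matrix.vecMul_vecMul, Matrix.mul_nonsing_inv K hdet] using this
      funext k
      have := congrFun hy0 (e2 k)
      simp only [hy, he2, Pi.zero_apply] at this
      rw [dif_pos (by simp)] at this
      rw [Pi.zero_apply]
      rw [← this]
      congr 1
      exact Fin.ext (by simp)
    have h1 : L.transpose.rank = M - n - p := by
      rw [Matrix.rank]
      rw [LinearMap.finrank_range_of_inj hinj]
      simp [Module.finrank_fintype_fun_eq_card]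
    rw [← Matrix.rank_transpose]
    exact h1
  -- rank C ≤ dim ker L
  have hrange : LinearMap.range C.mulVecLin ≤ LinearMap.ker L.mulVecLin := by
    rintro v ⟨x, rfl⟩
    simp only [LinearMap.mem_ker, Matrix.mulVecLin_apply]
    rw [Matrix.mulVec_mulVec, hLC]
    simp
  have hleq : C.rank ≤ Module.finrank ℝ (LinearMap.ker L.mulVecLin) := by
    rw [Matrix.rank]
    exact Submodule.finrank_mono hrange
  have hrn := LinearMap.finrank_range_add_finrank_ker L.mulVecLin
  rw [show Module.finrank ℝ (LinearMap.range L.mulVecLin) = L.rank from rfl] at hrn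
  rw [hLrank] at hrn
  simp [Module.finrank_fintype_fun_eq_card] at hrn
  omega
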